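/- Let (X, d, ≤) be an ordered metric space and T : X → X an increasing Picard operator whose unique fixed point is x*. Then for any x ∈ X with x ≤ T(x), one has x ≤ x*. (Abstract Gronwall lemma.) -/
import Mathlib

open Filter

/-- abstract Gronwall lemma: if `T` is an increasing Picard
operator on an ordered metric space with unique fixed point `x*`, then
`x ≤ T x` implies `x ≤ x*`. -/
theorem abstract_gronwall
    (X : Type*) [MetricSpace X] [PartialOrder X] [OrderClosedTopology X]
    (T : X → X) (hmono : Monotone T)
    (xstar : X) (hfix : T xstar = xstar)
    (huniq : ∀ y : X, T y = y → y = xstar)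
    (hconv : ∀ x₀ : X, Tendsto (fun n => T^[n] x₀) atTop (nhds xstar)) :
    ∀ x : X, x ≤ T x → x ≤ xstar := by
  intro x hx
  have h : ∀ n, x ≤ T^[n] x := by
    intro n
    induction n with
    | zero => simp
    | succ n ih =>
      calc x ≤ T x := hx
      _ ≤ T (T^[n] x) := hmono ih
      _ = T^[n+1] x := (Function.iterate_succ_apply' T n x).symm
  exact ge_of_tendsto (hconv x) (Eventually.of_forall h)
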